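/- (Second moment bound for the χ² kernel) For all x, y ∈ (0,1]: ∫_{−∞}^{∞} h(x,y,ω)²·κ_χ(ω) dω ≤ 23·f_χ(x,y)². In particular, if T is the random variable taking value h(x,y,ω) when ω is drawn with density κ_χ, then E[T] = f_χ(x,y) and Var[T] ≤ 23·f_χ(x,y)². -/

import Mathlib

open Real MeasureTheory

/-- The kernel integrand `h(x,y,ω)`. -/
noncomputable def h (x y ω : ℝ) : ℝ :=
  (Real.sqrt x * Real.cos (ω * Real.log x) - Real.sqrt y * Real.cos (ω * Real.log y)) ^ 2 +
  (Real.sqrt x * Real.sin (ω * Real.log x) - Real.sqrt y * Real.sin (ω * Real.log y)) ^ 2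

/-- Hyperbolic secant. -/
noncomputable def sech (t : ℝ) : ℝ := 2 / (Real.exp t + Real.exp (-t))

/-- The JS kernel density `κ(ω)`. -/
noncomputable def kJ (ω : ℝ) : ℝ := 2 * sech (Real.pi * ω) / (Real.log 4 * (1 + 4 * ω ^ 2))

/-- The χ² kernel density `κ_χ(ω)`. -/
noncomputable def kChi (ω : ℝ) : ℝ := sech (Real.pi * ω)

/-- One-dimensional Jensen–Shannon divergence (with `0·log 0 = 0`, `f_J(0,0) = 0`,
which hold automatically since `Real.log 0 = 0` and `0/0 = 0` in Lean). -/
noncomputable def fJ (x y : ℝ) : ℝ :=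
  x * Real.log (2 * x / (x + y)) + y * Real.log (2 * y / (x + y))

/-- One-dimensional symmetrized χ² divergence (with `f_χ(0,0) = 0`,
which holds automatically since `0/0 = 0` in Lean). -/
noncomputable def fChi (x y : ℝ) : ℝ := (x - y) ^ 2 / (x + y)

/-- One-dimensional Hellinger distance. -/
noncomputable def fH (x y : ℝ) : ℝ := (Real.sqrt x - Real.sqrt y) ^ 2

private lemma himg : (fun x : ℝ => x / (1 - x)) '' Set.Ioo 0 1 = Set.Ioi 0 := by
  ext t
  constructor
  · rintro ⟨x, ⟨hx0, hx1⟩, rfl⟩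
    exact div_pos hx0 (by linarith)
  · intro ht
    have ht' : (0:ℝ) < t := ht
    refine ⟨t / (1 + t), ⟨div_pos ht' (by linarith), ?_⟩, ?_⟩
    · rw [div_lt_one (by linarith)]; linarith
    · field_simp
      ring

private lemma hderiv : ∀ x ∈ Set.Ioo (0:ℝ) 1,
    HasDerivWithinAt (fun x : ℝ => x / (1 - x)) (1 / (1 - x) ^ 2) (Set.Ioo 0 1) x := by
  intro x hx
  have hne : (1 : ℝ) - x ≠ 0 := by intro h; nlinarith [hx.2]
  have hd : HasDerivAt (fun x : ℝ => x / (1 - x))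
      ((1 * (1 - x) - x * (0 - 1)) / (1 - x) ^ 2) x :=
    (hasDerivAt_id x).div ((hasDerivAt_const x (1:ℝ)).sub (hasDerivAt_id x)) hne
  have : (1 * (1 - x) - x * (0 - 1)) / (1 - x) ^ 2 = 1 / (1 - x) ^ 2 := by ring
  rw [this] at hd
  exact hd.hasDerivWithinAt

private lemma hinj : Set.InjOn (fun x : ℝ => x / (1 - x)) (Set.Ioo 0 1) := by
  intro a ha b hb hab
  have ha' : (1:ℝ) - a ≠ 0 := by intro h; nlinarith [ha.2]
  have hb' : (1:ℝ) - b ≠ 0 := by intro h; nlinarith [hb.2]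
  field_simp at hab
  nlinarith [hab]

private lemma hpointwise {s : ℂ} (x : ℝ) (hx : x ∈ Set.Ioo (0:ℝ) 1) :
    |1 / (1 - x) ^ 2| • (((x / (1 - x) : ℝ) : ℂ) ^ (s - 1) / (1 + ((x / (1 - x) : ℝ) : ℂ)))
      = (x:ℂ) ^ (s - 1) * (1 - (x:ℂ)) ^ (1 - s - 1) := by
  have hx0 : (0:ℝ) < x := hx.1
  have hc : (0:ℝ) < 1 - x := by linarith [hx.2]
  have hcne : ((1 - x : ℝ) : ℂ) ≠ 0 := by exact_mod_cast ne_of_gt hc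
  have harg : Complex.arg ((1 - x : ℝ) : ℂ) ≠ π := by
    rw [Complex.arg_ofReal_of_nonneg hc.le]
    exact (Real.pi_ne_zero).symm
  have hcne' : (1:ℂ) - (x:ℂ) ≠ 0 := by
    rw [show (1:ℂ) - (x:ℂ) = (((1-x):ℝ):ℂ) by push_cast; ring]
    exact hcne
  have h1 : ((x / (1 - x) : ℝ) : ℂ) ^ (s - 1)
      = (x:ℂ) ^ (s - 1) * ((1 - x : ℝ) : ℂ) ^ (1 - s) := by
    rw [div_eq_mul_inv, Complex.ofReal_mul,
      Complex.mul_cpow_ofReal_nonneg hx0.le (inv_nonneg.2 hc.le),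
      Complex.ofReal_inv, Complex.inv_cpow _ _ harg, ← Complex.cpow_neg]
    ring_nf
  have h2 : 1 + ((x / (1 - x) : ℝ) : ℂ) = (((1 - x)⁻¹ : ℝ) : ℂ) := by
    push_cast
    field_simp
    ring
  rw [h1, h2]
  have habs : |1 / (1 - x) ^ 2| = 1 / (1-x)^2 := abs_of_pos (by positivity)
  rw [habs, Complex.real_smul]
  have e1 : (((1-x):ℝ):ℂ) ^ (1 - s - 1) = (((1-x):ℝ):ℂ) ^ (1-s) * (((1-x):ℝ):ℂ)⁻¹ := by
    rw [← Complex.cpow_neg_one, ← Complex.cpow_add _ _ hcne]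
    ring_nf
  rw [show (1:ℂ) - (x:ℂ) = (((1-x):ℝ):ℂ) by push_cast; ring, e1]
  have hcast : ((1 / (1 - x) ^ 2 : ℝ) : ℂ) = 1 / (((1-x):ℝ):ℂ) ^ 2 := by push_cast; ring
  rw [hcast]
  field_simp
  ring
  rw [Complex.ofReal_inv, inv_inv]

private lemma mellin_one_add {s : ℂ} (h0 : 0 < s.re) (h1 : s.re < 1) :
    ∫ t in Set.Ioi (0:ℝ), (t:ℂ) ^ (s - 1) / (1 + (t:ℂ)) = ↑π / Complex.sin (↑π * s) := by
  have hv : 0 < (1 - s).re := by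
    simp only [Complex.sub_re, Complex.one_re]; linarith
  have hB : Complex.betaIntegral s (1 - s) = ↑π / Complex.sin (↑π * s) := by
    have h2 := Complex.Gamma_mul_Gamma_eq_betaIntegral h0 hv
    rw [show s + (1 - s) = 1 by ring, Complex.Gamma_one, one_mul] at h2
    rw [← h2, Complex.Gamma_mul_Gamma_one_sub]
  have hcv := integral_image_eq_integral_abs_deriv_smul measurableSet_Ioo hderiv hinj
      (fun t : ℝ => (t:ℂ) ^ (s - 1) / (1 + (t:ℂ)))
  rw [himg] at hcv
  rw [hcv, ← hB]
  rw [Complex.betaIntegral, intervalIntegral.integral_of_le (by norm_num : (0:ℝ) ≤ 1),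
    MeasureTheory.integral_Ioc_eq_integral_Ioo]
  exact setIntegral_congr_fun measurableSet_Ioo fun x hx => hpointwise x hx

private lemma mellin_integrable {s : ℂ} (h0 : 0 < s.re) (h1 : s.re < 1) :
    IntegrableOn (fun t : ℝ => (t:ℂ) ^ (s - 1) / (1 + (t:ℂ))) (Set.Ioi 0) := by
  have hv : 0 < (1 - s).re := by
    simp only [Complex.sub_re, Complex.one_re]; linarith
  have hbeta := Complex.betaIntegral_convergent h0 hv
  have hIoo : IntegrableOn (fun x : ℝ => (x:ℂ) ^ (s - 1) * (1 - (x:ℂ)) ^ (1 - s - 1))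
      (Set.Ioo 0 1) := by
    have := (intervalIntegrable_iff_integrableOn_Ioo_of_le (by norm_num : (0:ℝ) ≤ 1)).mp hbeta
    exact this
  rw [← himg, integrableOn_image_iff_integrableOn_abs_deriv_smul measurableSet_Ioo hderiv hinj]
  exact hIoo.congr_fun (fun x hx => (hpointwise x hx).symm) measurableSet_Ioo

private lemma sqrt_eq_exp_half {u : ℝ} (hu : 0 < u) : Real.sqrt u = Real.exp (Real.log u / 2) := by
  rw [← Real.exp_log (Real.sqrt_pos.2 hu), Real.log_sqrt hu.le]

private lemma integral_cos_log (a : ℝ) :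
    ∫ u in Set.Ioi (0:ℝ), Real.cos (a * Real.log u) / (Real.sqrt u * (1 + u))
      = π / Real.cosh (π * a) := by
  set s : ℂ := 1/2 + (a : ℂ) * Complex.I with hs
  have hsre : s.re = 1/2 := by simp [hs]
  have h0 : 0 < s.re := by rw [hsre]; norm_num
  have h1 : s.re < 1 := by rw [hsre]; norm_num
  have hval := mellin_one_add h0 h1
  have hint := mellin_integrable h0 h1
  have hpt : ∀ u ∈ Set.Ioi (0:ℝ),
      Real.cos (a * Real.log u) / (Real.sqrt u * (1 + u))
        = ((u:ℂ) ^ (s - 1) / (1 + (u:ℂ))).re := by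
    intro u hu
    have hu' : (0:ℝ) < u := hu
    have hune : (u:ℂ) ≠ 0 := by exact_mod_cast ne_of_gt hu'
    have hlog : Complex.log (u:ℂ) = ((Real.log u : ℝ) : ℂ) := (Complex.ofReal_log hu'.le).symm
    rw [show 1 + (u:ℂ) = (((1+u : ℝ)):ℂ) by push_cast; ring, Complex.div_ofReal_re,
      Complex.cpow_def_of_ne_zero hune, hlog, Complex.exp_re]
    have har : (((Real.log u : ℝ):ℂ) * (s - 1)).re = -(Real.log u / 2) := by
      simp [hs, Complex.mul_re, Complex.sub_re, Complex.sub_im]; ring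
    have hai : (((Real.log u : ℝ):ℂ) * (s - 1)).im = Real.log u * a := by
      simp [hs, Complex.mul_im, Complex.sub_re, Complex.sub_im]
    rw [har, hai, Real.exp_neg, ← sqrt_eq_exp_half hu', mul_comm (Real.log u) a]
    have hsq : Real.sqrt u ≠ 0 := ne_of_gt (Real.sqrt_pos.2 hu')
    have h1u : (1:ℝ) + u ≠ 0 := by positivity
    field_simp
  have hsin : Complex.sin (↑π * s) = ((Real.cosh (π*a) : ℝ) : ℂ) := by
    rw [show (↑π * s : ℂ) = ↑(π/2) + ↑(π*a) * Complex.I by rw [hs]; push_cast; ring,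
      Complex.sin_add, Complex.cos_mul_I, ← Complex.ofReal_sin, ← Complex.ofReal_cos,
      Real.sin_pi_div_two, Real.cos_pi_div_two, ← Complex.ofReal_cosh]
    simp
  calc ∫ u in Set.Ioi (0:ℝ), Real.cos (a * Real.log u) / (Real.sqrt u * (1 + u))
      = ∫ u in Set.Ioi (0:ℝ), ((u:ℂ) ^ (s - 1) / (1 + (u:ℂ))).re :=
        setIntegral_congr_fun measurableSet_Ioi hpt
    _ = (∫ u in Set.Ioi (0:ℝ), (u:ℂ) ^ (s - 1) / (1 + (u:ℂ))).re := by
        simpa using integral_re hint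
    _ = ((↑π : ℂ) / Complex.sin (↑π * s)).re := by rw [hval]
    _ = π / Real.cosh (π * a) := by
        rw [hsin, show ((π:ℝ) : ℂ) / ((Real.cosh (π*a) : ℝ) : ℂ) = ((π / Real.cosh (π*a) : ℝ) : ℂ)
          by push_cast; ring, Complex.ofReal_re]

private lemma sech_cosh (t : ℝ) : sech t = (Real.cosh t)⁻¹ := by
  rw [sech, Real.cosh_eq, inv_div]

private lemma sech_pos (t : ℝ) : 0 < sech t := by
  rw [sech_cosh]; exact inv_pos.2 (Real.cosh_pos (x := t))

private lemma sech_neg (t : ℝ) : sech (-t) = sech t := by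
  rw [sech, sech, neg_neg, add_comm]

private lemma sech_le (t : ℝ) : sech t ≤ 2 * Real.exp (-t) := by
  rw [sech, div_le_iff₀ (by positivity)]
  have h2 : 0 < Real.exp (-t) := Real.exp_pos (-t)
  have h3 : Real.exp (-t) * Real.exp t = 1 := by
    rw [← Real.exp_add]; simp
  nlinarith [Real.exp_pos t]

private lemma sech_log {t : ℝ} (ht : 0 < t) : sech (Real.log t) = 2 * t / (1 + t^2) := by
  rw [sech, Real.exp_log ht, Real.exp_neg, Real.exp_log ht,
    div_eq_div_iff (by positivity) (by positivity)]
  field_simp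
  ring

private lemma cont_cos_sech (b : ℝ) : Continuous (fun ω : ℝ => Real.cos (b * ω) * sech (π * ω)) := by
  apply Continuous.mul
  · exact Real.continuous_cos.comp (continuous_const.mul continuous_id)
  · unfold sech
    apply Continuous.div continuous_const
    · exact (Real.continuous_exp.comp (continuous_const.mul continuous_id)).add
        (Real.continuous_exp.comp (continuous_const.mul continuous_id).neg)
    · intro x
      positivity

private lemma integrable_cos_sech (b : ℝ) :
    Integrable (fun ω : ℝ => Real.cos (b * ω) * sech (π * ω)) := by
  have hIoi : IntegrableOn (fun ω : ℝ => Real.cos (b * ω) * sech (π * ω)) (Set.Ioi 0) := by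
    have hexp : IntegrableOn (fun ω : ℝ => 2 * Real.exp (-(π * ω))) (Set.Ioi 0) := by
      simpa [neg_mul, IntegrableOn] using (exp_neg_integrableOn_Ioi 0 Real.pi_pos).const_mul 2
    apply hexp.mono' ((cont_cos_sech b).aestronglyMeasurable.restrict)
    refine (ae_restrict_iff' measurableSet_Ioi).2 (Filter.Eventually.of_forall fun ω hω => ?_)
    rw [norm_mul, Real.norm_eq_abs, Real.norm_eq_abs, abs_of_pos (sech_pos _)]
    calc |Real.cos (b*ω)| * sech (π*ω) ≤ 1 * sech (π*ω) :=
          mul_le_mul_of_nonneg_right (Real.abs_cos_le_one _) (sech_pos _).le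
      _ = sech (π*ω) := one_mul _
      _ ≤ 2 * Real.exp (-(π*ω)) := sech_le _
  have hIio : IntegrableOn (fun ω : ℝ => Real.cos (b * ω) * sech (π * ω)) (Set.Iio 0) := by
    have himgn : (fun t : ℝ => -t) '' Set.Ioi 0 = Set.Iio 0 := by
      ext t
      constructor
      · rintro ⟨x, hx, rfl⟩; simpa using hx
      · intro ht; exact ⟨-t, by simpa using ht, by simp⟩
    have hdn : ∀ t ∈ Set.Ioi (0:ℝ), HasDerivWithinAt (fun t : ℝ => -t) (-1) (Set.Ioi 0) t :=
      fun t _ => (hasDerivAt_id t).neg.hasDerivWithinAt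
    have hin : Set.InjOn (fun t : ℝ => -t) (Set.Ioi 0) := fun a _ b _ h => by simpa using neg_injective h
    rw [← himgn, integrableOn_image_iff_integrableOn_abs_deriv_smul measurableSet_Ioi hdn hin]
    apply hIoi.congr_fun _ measurableSet_Ioi
    intro t _
    simp only [abs_neg, abs_one, one_smul, mul_neg, Real.cos_neg, sech_neg]
  rw [← integrableOn_univ, ← Set.Iio_union_Ici (a := (0:ℝ))]
  exact hIio.union ((integrableOn_Ici_iff_integrableOn_Ioi (by simp)).2 hIoi)

private lemma integral_cos_sech (b : ℝ) :
    ∫ ω : ℝ, Real.cos (b * ω) * sech (π * ω) = sech (b / 2) := by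
  have hπ : (0:ℝ) < π := Real.pi_pos
  have hπ' : (π:ℝ) ≠ 0 := ne_of_gt hπ
  -- Step B : ∫ t in Ioi 0, cos((b/π) log t)/(1+t²) = π/(2 cosh(b/2))
  have hB : ∫ t in Set.Ioi (0:ℝ), Real.cos ((b/π) * Real.log t) / (1 + t^2)
      = π / Real.cosh (b/2) / 2 := by
    have himg2 : (fun t : ℝ => t^2) '' Set.Ioi 0 = Set.Ioi 0 := by
      ext u
      constructor
      · rintro ⟨t, ht, rfl⟩; exact pow_pos (Set.mem_Ioi.1 ht) 2
      · intro hu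
        exact ⟨Real.sqrt u, Real.sqrt_pos.2 hu, Real.sq_sqrt (le_of_lt hu)⟩
    have hd2 : ∀ t ∈ Set.Ioi (0:ℝ), HasDerivWithinAt (fun t : ℝ => t^2) (2*t) (Set.Ioi 0) t := by
      intro t _
      simpa [mul_comm] using (hasDerivAt_pow 2 t).hasDerivWithinAt
    have hi2 : Set.InjOn (fun t : ℝ => t^2) (Set.Ioi 0) := by
      intro p hp q hq hpq
      simp only at hpq
      nlinarith [Set.mem_Ioi.1 hp, Set.mem_Ioi.1 hq]
    have hcv := integral_image_eq_integral_abs_deriv_smul measurableSet_Ioi hd2 hi2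
      (fun u : ℝ => Real.cos ((b/(2*π)) * Real.log u) / (Real.sqrt u * (1 + u)))
    rw [himg2, integral_cos_log (b/(2*π))] at hcv
    have hrw : ∀ t ∈ Set.Ioi (0:ℝ),
        |2*t| • (Real.cos ((b/(2*π)) * Real.log (t^2)) / (Real.sqrt (t^2) * (1 + t^2)))
        = 2 * (Real.cos ((b/π) * Real.log t) / (1 + t^2)) := by
      intro t ht
      have ht' : (0:ℝ) < t := ht
      rw [Real.sqrt_sq ht'.le, Real.log_pow, abs_of_pos (by linarith), smul_eq_mul]
      rw [show (b/(2*π)) * ((2:ℕ) * Real.log t) = (b/π) * Real.log t by push_cast; field_simp]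
      field_simp
    rw [setIntegral_congr_fun measurableSet_Ioi hrw, MeasureTheory.integral_const_mul _ _] at hcv
    have hc : π * (b/(2*π)) = b/2 := by field_simp
    rw [hc] at hcv
    linarith [hcv]
  -- Step A : transfer to the real line
  have himg3 : (fun t : ℝ => Real.log t / π) '' Set.Ioi 0 = Set.univ := by
    ext ω
    simp only [Set.mem_univ, iff_true]
    refine ⟨Real.exp (π * ω), Real.exp_pos _, ?_⟩
    show Real.log (Real.exp (π * ω)) / π = ω
    rw [Real.log_exp]
    field_simp
  have hd3 : ∀ t ∈ Set.Ioi (0:ℝ),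
      HasDerivWithinAt (fun t : ℝ => Real.log t / π) (t⁻¹ / π) (Set.Ioi 0) t := by
    intro t ht
    exact ((Real.hasDerivAt_log (ne_of_gt ht)).div_const π).hasDerivWithinAt
  have hi3 : Set.InjOn (fun t : ℝ => Real.log t / π) (Set.Ioi 0) := by
    intro p hp q hq hpq
    simp only [div_eq_div_iff hπ' hπ'] at hpq
    have : Real.log p = Real.log q := mul_right_cancel₀ hπ' hpq
    rw [← Real.exp_log (Set.mem_Ioi.1 hp), ← Real.exp_log (Set.mem_Ioi.1 hq), this]
  have hcv3 := integral_image_eq_integral_abs_deriv_smul measurableSet_Ioi hd3 hi3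
    (fun ω : ℝ => Real.cos (b * ω) * sech (π * ω))
  rw [himg3, MeasureTheory.setIntegral_univ] at hcv3
  rw [hcv3]
  have hrw3 : ∀ t ∈ Set.Ioi (0:ℝ),
      |t⁻¹ / π| • (Real.cos (b * (Real.log t / π)) * sech (π * (Real.log t / π)))
      = (2/π) * (Real.cos ((b/π) * Real.log t) / (1 + t^2)) := by
    intro t ht
    have ht' : (0:ℝ) < t := ht
    have h1 : π * (Real.log t / π) = Real.log t := by field_simp
    have h2 : b * (Real.log t / π) = (b/π) * Real.log t := by field_simp
    rw [h1, h2, sech_log ht', abs_of_pos (by positivity), smul_eq_mul]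
    field_simp
  rw [setIntegral_congr_fun measurableSet_Ioi hrw3, MeasureTheory.integral_const_mul _ _, hB,
    sech_cosh]
  field_simp

/-- Second moment bound for the χ² kernel: the second moment of the
random variable `T = h(x,y,ω)`, for `ω` drawn with density `κ_χ`, is at most
`23·f_χ(x,y)²`; in particular `E[T] = f_χ(x,y)` and `Var[T] ≤ 23·f_χ(x,y)²`. -/
theorem chiSq_second_moment_bound :
    ∀ x ∈ Set.Ioc (0 : ℝ) 1, ∀ y ∈ Set.Ioc (0 : ℝ) 1,
      (∫ ω : ℝ, (h x y ω) ^ 2 * kChi ω) ≤ 23 * (fChi x y) ^ 2 ∧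
      (∫ ω : ℝ, h x y ω * kChi ω) = fChi x y ∧
      (∫ ω : ℝ, (h x y ω) ^ 2 * kChi ω) - (∫ ω : ℝ, h x y ω * kChi ω) ^ 2
        ≤ 23 * (fChi x y) ^ 2 := by
  intro x hx y hy
  have hx0 : (0:ℝ) < x := hx.1
  have hy0 : (0:ℝ) < y := hy.1
  have hs0 : (0:ℝ) < x + y := by linarith
  set L : ℝ := Real.log x - Real.log y with hL
  set q : ℝ := Real.sqrt x * Real.sqrt y with hqdef
  have sx : (0:ℝ) < Real.sqrt x := Real.sqrt_pos.2 hx0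
  have sy : (0:ℝ) < Real.sqrt y := Real.sqrt_pos.2 hy0
  have hq : q ^ 2 = x * y := by
    rw [hqdef, mul_pow, Real.sq_sqrt hx0.le, Real.sq_sqrt hy0.le]
  -- pointwise formula for h
  have hh : ∀ ω : ℝ, h x y ω = (x + y) - 2 * q * Real.cos (L * ω) := by
    intro ω
    have e1 : Real.cos (ω * Real.log x) ^ 2 + Real.sin (ω * Real.log x) ^ 2 = 1 :=
      Real.cos_sq_add_sin_sq _
    have e2 : Real.cos (ω * Real.log y) ^ 2 + Real.sin (ω * Real.log y) ^ 2 = 1 :=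
      Real.cos_sq_add_sin_sq _
    have e3 : Real.cos (L * ω) = Real.cos (ω * Real.log x) * Real.cos (ω * Real.log y)
        + Real.sin (ω * Real.log x) * Real.sin (ω * Real.log y) := by
      rw [show L * ω = ω * Real.log x - ω * Real.log y by rw [hL]; ring, Real.cos_sub]
    have hx2 : Real.sqrt x ^ 2 = x := Real.sq_sqrt hx0.le
    have hy2 : Real.sqrt y ^ 2 = y := Real.sq_sqrt hy0.le
    show (Real.sqrt x * Real.cos (ω * Real.log x) - Real.sqrt y * Real.cos (ω * Real.log y)) ^ 2 +
      (Real.sqrt x * Real.sin (ω * Real.log x) - Real.sqrt y * Real.sin (ω * Real.log y)) ^ 2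
      = (x + y) - 2 * q * Real.cos (L * ω)
    calc (Real.sqrt x * Real.cos (ω * Real.log x) - Real.sqrt y * Real.cos (ω * Real.log y)) ^ 2 +
        (Real.sqrt x * Real.sin (ω * Real.log x) - Real.sqrt y * Real.sin (ω * Real.log y)) ^ 2
        = Real.sqrt x ^ 2 * (Real.cos (ω * Real.log x) ^ 2 + Real.sin (ω * Real.log x) ^ 2)
          + Real.sqrt y ^ 2 * (Real.cos (ω * Real.log y) ^ 2 + Real.sin (ω * Real.log y) ^ 2)
          - 2 * (Real.sqrt x * Real.sqrt y) * (Real.cos (ω * Real.log x) * Real.cos (ω * Real.log y)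
            + Real.sin (ω * Real.log x) * Real.sin (ω * Real.log y)) := by ring
      _ = x * 1 + y * 1 - 2 * q * Real.cos (L * ω) := by rw [hx2, hy2, e1, e2, e3, hqdef]
      _ = (x + y) - 2 * q * Real.cos (L * ω) := by ring
  -- sech values
  have hsechL2 : sech (L / 2) = 2 * q / (x + y) := by
    rw [sech]
    have h1 : Real.exp (L / 2) = Real.sqrt x / Real.sqrt y := by
      rw [show L / 2 = Real.log x / 2 - Real.log y / 2 by rw [hL]; ring, Real.exp_sub,
        ← sqrt_eq_exp_half hx0, ← sqrt_eq_exp_half hy0]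
    have h2 : Real.exp (-(L / 2)) = Real.sqrt y / Real.sqrt x := by
      rw [show -(L / 2) = Real.log y / 2 - Real.log x / 2 by rw [hL]; ring, Real.exp_sub,
        ← sqrt_eq_exp_half hx0, ← sqrt_eq_exp_half hy0]
    rw [h1, h2]
    have key : Real.sqrt x / Real.sqrt y + Real.sqrt y / Real.sqrt x = (x + y) / q := by
      rw [div_add_div _ _ (ne_of_gt sy) (ne_of_gt sx), Real.mul_self_sqrt hx0.le,
        Real.mul_self_sqrt hy0.le, hqdef, mul_comm (Real.sqrt y) (Real.sqrt x)]
    rw [key, div_div_eq_mul_div]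
  have hsechL : sech L = 2 * (x * y) / (x ^ 2 + y ^ 2) := by
    rw [sech, show L = Real.log (x / y) by
        rw [hL, Real.log_div (ne_of_gt hx0) (ne_of_gt hy0)],
      Real.exp_neg, Real.exp_log (div_pos hx0 hy0)]
    rw [div_eq_div_iff (by positivity) (by positivity)]
    field_simp
  have hsech0 : sech 0 = 1 := by
    rw [sech]; norm_num
  -- the mean
  have hE : (∫ ω : ℝ, h x y ω * kChi ω) = (x + y) - 2 * q * sech (L / 2) := by
    have hptE : ∀ ω : ℝ, h x y ω * kChi ω
        = (x + y) * (Real.cos (0 * ω) * sech (π * ω))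
          - (2 * q) * (Real.cos (L * ω) * sech (π * ω)) := by
      intro ω
      rw [hh ω, kChi]
      simp only [zero_mul, Real.cos_zero]
      ring
    rw [integral_congr_ae (Filter.Eventually.of_forall hptE),
      integral_sub ((integrable_cos_sech 0).const_mul _) ((integrable_cos_sech L).const_mul _),
      MeasureTheory.integral_const_mul, MeasureTheory.integral_const_mul,
      integral_cos_sech, integral_cos_sech]
    norm_num [hsech0]
  have hEval : (∫ ω : ℝ, h x y ω * kChi ω) = fChi x y := by
    rw [hE, hsechL2, fChi]
    field_simp
    linear_combination (-4 : ℝ) * hq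
  -- the second moment
  have hM2 : (∫ ω : ℝ, (h x y ω) ^ 2 * kChi ω)
      = ((x + y) ^ 2 + 2 * (x * y)) - (4 * (x + y) * q) * sech (L / 2)
        + (2 * (x * y)) * sech ((2 * L) / 2) := by
    have hptM : ∀ ω : ℝ, (h x y ω) ^ 2 * kChi ω
        = (((x + y) ^ 2 + 2 * (x * y)) * (Real.cos (0 * ω) * sech (π * ω))
          - (4 * (x + y) * q) * (Real.cos (L * ω) * sech (π * ω)))
          + (2 * (x * y)) * (Real.cos ((2 * L) * ω) * sech (π * ω)) := by
      intro ω
      rw [hh ω, kChi]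
      rw [show (2 * L) * ω = 2 * (L * ω) by ring, Real.cos_two_mul]
      simp only [zero_mul, Real.cos_zero]
      linear_combination (4 * Real.cos (L * ω) ^ 2 * sech (π * ω)) * hq
    have i0 : Integrable (fun ω : ℝ =>
        ((x + y) ^ 2 + 2 * (x * y)) * (Real.cos (0 * ω) * sech (π * ω))) :=
      (integrable_cos_sech 0).const_mul _
    have iL : Integrable (fun ω : ℝ =>
        (4 * (x + y) * q) * (Real.cos (L * ω) * sech (π * ω))) :=
      (integrable_cos_sech L).const_mul _
    have i2 : Integrable (fun ω : ℝ =>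
        (2 * (x * y)) * (Real.cos ((2 * L) * ω) * sech (π * ω))) :=
      (integrable_cos_sech (2 * L)).const_mul _
    have iSub : Integrable (fun ω : ℝ =>
        ((x + y) ^ 2 + 2 * (x * y)) * (Real.cos (0 * ω) * sech (π * ω))
          - (4 * (x + y) * q) * (Real.cos (L * ω) * sech (π * ω))) := i0.sub iL
    rw [integral_congr_ae (Filter.Eventually.of_forall hptM),
      integral_add iSub i2, integral_sub i0 iL,
      MeasureTheory.integral_const_mul, MeasureTheory.integral_const_mul,
      MeasureTheory.integral_const_mul, integral_cos_sech, integral_cos_sech, integral_cos_sech]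
    norm_num [hsech0]
  have hsechL2q : q * sech (L / 2) = 2 * (x * y) / (x + y) := by
    rw [hsechL2]
    field_simp
    linear_combination (1 : ℝ) * hq
  have hM2val : (∫ ω : ℝ, (h x y ω) ^ 2 * kChi ω) = (x - y) ^ 4 / (x ^ 2 + y ^ 2) := by
    rw [hM2, show (2 * L) / 2 = L by ring, hsechL,
      mul_assoc (4 * (x + y)) q (sech (L / 2)), hsechL2q]
    have hxy2 : (0:ℝ) < x ^ 2 + y ^ 2 := by positivity
    field_simp
    ring
  have hbound : (∫ ω : ℝ, (h x y ω) ^ 2 * kChi ω) ≤ 23 * (fChi x y) ^ 2 := by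
    rw [hM2val]
    have hfchi : 23 * (fChi x y) ^ 2 = 23 * (x - y) ^ 4 / (x + y) ^ 2 := by
      rw [fChi]
      field_simp
    rw [hfchi, div_le_div_iff₀ (by positivity) (by positivity)]
    nlinarith [pow_nonneg (sq_nonneg (x - y)) 3, sq_nonneg (x - y),
      mul_nonneg (sq_nonneg ((x - y) ^ 2)) (by positivity : (0:ℝ) ≤ x ^ 2 + y ^ 2)]
  exact ⟨hbound, hEval, by nlinarith [sq_nonneg (∫ ω : ℝ, h x y ω * kChi ω)]⟩
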